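/- For any f ∈ C(T) and positive integer m, the pre-inner-product norm satisfies ⟨f, f⟩_m = L_m(|f|²) ≥ 0 in C(T), and L_m(|f|²) = 0 implies f = 0; moreover ‖L_m(|f|²)‖_∞ ≤ ‖f‖_∞² and ‖f‖_∞² ≤ m·‖L_m(|f|²)‖_∞. -/

import Mathlib

open scoped Real ComplexOrder

noncomputable def Lm (m : ℕ) (f : Circle → ℂ) (z : Circle) : ℂ :=
  (m : ℂ)⁻¹ * ∑ᶠ w ∈ {w : Circle | w ^ m = z}, f w

noncomputable def Em (m : ℕ) (f : Circle → ℂ) (z : Circle) : ℂ :=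
  (m : ℂ)⁻¹ * ∑ j ∈ Finset.range m, f (Circle.exp (2 * π * j / m) * z)

noncomputable def Zf (k : ℤ) : C(Circle, ℂ) :=
  ⟨fun z => ((z ^ k : Circle) : ℂ), continuous_induced_dom.comp (continuous_zpow k)⟩

noncomputable def alphaMap (m : ℕ) (f : C(Circle, ℂ)) : C(Circle, ℂ) :=
  f.comp ⟨fun z => z ^ m, by fun_prop⟩

lemma rootsFinite (m : ℕ) (hm : 0 < m) (z : Circle) :
    {w : Circle | w ^ m = z}.Finite := by
  have h : {w : Circle | w ^ m = z} ⊆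
      (fun w : Circle => (w : ℂ)) ⁻¹' ↑((Polynomial.nthRoots m ((z : Circle) : ℂ)).toFinset) := by
    intro w hw
    simp only [Set.mem_preimage, Finset.coe_sort_coe, Multiset.mem_toFinset, Finset.mem_coe]
    rw [Polynomial.mem_nthRoots hm]
    rw [← hw]; rfl
  exact Set.Finite.subset
    (Set.Finite.preimage (fun a _ b _ h => Subtype.coe_injective h) (Set.finite_mem_finset _)) h

lemma rootsCard (m : ℕ) (hm : 0 < m) (z : Circle) :
    (rootsFinite m hm z).toFinset.card ≤ m := by
  classical
  have h1 : (rootsFinite m hm z).toFinset.card ≤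
      (Polynomial.nthRoots m ((z : Circle) : ℂ)).toFinset.card := by
    apply Finset.card_le_card_of_injOn (fun w : Circle => (w : ℂ))
    · intro w hw
      simp only [Finset.mem_coe, Set.Finite.mem_toFinset, Set.mem_setOf_eq] at hw
      simp only [Finset.mem_coe, Multiset.mem_toFinset]
      rw [Polynomial.mem_nthRoots hm, ← hw]; rfl
    · exact fun a _ b _ h => Subtype.coe_injective h
  calc _ ≤ _ := h1
    _ ≤ Multiset.card (Polynomial.nthRoots m ((z : Circle) : ℂ)) := Multiset.toFinset_card_le _
    _ ≤ m := Polynomial.card_nthRoots m _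

lemma LmEq (m : ℕ) (hm : 0 < m) (g : Circle → ℂ) (z : Circle) :
    Lm m g z = (m : ℂ)⁻¹ * ∑ w ∈ (rootsFinite m hm z).toFinset, g w := by
  rw [Lm, ← finsum_mem_coe_finset, Set.Finite.coe_toFinset]

lemma normLeNorm {a b : ℂ} (ha : 0 ≤ a) (hab : a ≤ b) : ‖a‖ ≤ ‖b‖ := by
  have hb : 0 ≤ b := ha.trans hab
  rw [Complex.eq_coe_norm_of_nonneg ha, Complex.eq_coe_norm_of_nonneg hb,
    Complex.real_le_real] at hab
  exact hab

/-- `⟨f,f⟩_m = L_m(|f|²) ≥ 0`, it vanishes only for `f = 0`, and the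
module norm is equivalent to the sup norm: `‖L_m(|f|²)‖_∞ ≤ ‖f‖_∞²` and
`‖f‖_∞² ≤ m ‖L_m(|f|²)‖_∞`. -/
theorem stmt16 (m : ℕ) (hm : 0 < m) (f : C(Circle, ℂ)) :
    (∀ z, 0 ≤ Lm m (fun w => star (f w) * f w) z) ∧
    ((∀ z, Lm m (fun w => star (f w) * f w) z = 0) → f = 0) ∧
    (∀ z, ‖Lm m (fun w => star (f w) * f w) z‖ ≤ ‖f‖ ^ 2) ∧
    ‖f‖ ^ 2 ≤ m * ⨆ z : Circle, ‖Lm m (fun w => star (f w) * f w) z‖ := by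
  have hminv : (0:ℂ) ≤ (m:ℂ)⁻¹ := by
    have : ((m:ℂ))⁻¹ = (((m:ℝ)⁻¹ : ℝ) : ℂ) := by push_cast; rfl
    rw [this]
    exact_mod_cast inv_nonneg.mpr (Nat.cast_nonneg m)
  have hterm : ∀ w : Circle, (0:ℂ) ≤ star (f w) * f w := fun w => star_mul_self_nonneg (f w)
  have hpos : ∀ z, 0 ≤ Lm m (fun w => star (f w) * f w) z := by
    intro z
    rw [LmEq m hm]
    exact mul_nonneg hminv (Finset.sum_nonneg fun w _ => hterm w)
  have hbound : ∀ z, ‖Lm m (fun w => star (f w) * f w) z‖ ≤ ‖f‖ ^ 2 := by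
    intro z
    rw [LmEq m hm, norm_mul]
    have h1 : ‖∑ w ∈ (rootsFinite m hm z).toFinset, star (f w) * f w‖ ≤ (m:ℝ) * ‖f‖ ^ 2 := by
      refine (norm_sum_le _ _).trans ?_
      have h2 : ∀ w ∈ (rootsFinite m hm z).toFinset, ‖star (f w) * f w‖ ≤ ‖f‖ ^ 2 := by
        intro w _
        rw [norm_mul, norm_star, ← sq]
        exact pow_le_pow_left₀ (norm_nonneg _) (f.norm_coe_le_norm w) 2
      refine (Finset.sum_le_card_nsmul _ _ _ h2).trans ?_
      rw [nsmul_eq_mul]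
      exact mul_le_mul_of_nonneg_right (by exact_mod_cast rootsCard m hm z) (by positivity)
    have hn : ‖(m:ℂ)⁻¹‖ = (m:ℝ)⁻¹ := by
      rw [norm_inv, Complex.norm_natCast]
    rw [hn]
    calc (m:ℝ)⁻¹ * ‖∑ w ∈ (rootsFinite m hm z).toFinset, star (f w) * f w‖
        ≤ (m:ℝ)⁻¹ * ((m:ℝ) * ‖f‖ ^ 2) := by
          exact mul_le_mul_of_nonneg_left h1 (by positivity)
      _ = ‖f‖ ^ 2 := by
          field_simp
  refine ⟨hpos, ?_, hbound, ?_⟩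
  · intro hz
    ext x
    have hx : x ∈ (rootsFinite m hm (x ^ m)).toFinset := by
      simp [Set.Finite.mem_toFinset]
    have h0 := hz (x ^ m)
    rw [LmEq m hm] at h0
    have hsum : ∑ w ∈ (rootsFinite m hm (x ^ m)).toFinset, star (f w) * f w = 0 := by
      rcases mul_eq_zero.mp h0 with h | h
      · exact absurd h (inv_ne_zero (Nat.cast_ne_zero.mpr hm.ne'))
      · exact h
    have := (Finset.sum_eq_zero_iff_of_nonneg fun w _ => hterm w).mp hsum x hx
    rcases mul_eq_zero.mp this with h | h
    · simpa using star_eq_zero.mp h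
    · simpa using h
  · -- ‖f‖^2 ≤ m * ⨆ ...
    set M := ⨆ z : Circle, ‖Lm m (fun w => star (f w) * f w) z‖ with hM
    have hbdd : BddAbove (Set.range fun z : Circle => ‖Lm m (fun w => star (f w) * f w) z‖) :=
      ⟨‖f‖ ^ 2, by rintro _ ⟨z, rfl⟩; exact hbound z⟩
    obtain ⟨x₀, -, hx₀⟩ := isCompact_univ.exists_isMaxOn (Set.univ_nonempty)
      (Continuous.continuousOn (by continuity : Continuous fun x : Circle => ‖f x‖))
    have hf : ‖f‖ ≤ ‖f x₀‖ := f.norm_le_of_nonempty.mpr fun x => hx₀ (Set.mem_univ x)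
    have key : ‖f x₀‖ ^ 2 ≤ m * ‖Lm m (fun w => star (f w) * f w) (x₀ ^ m)‖ := by
      have hx : x₀ ∈ (rootsFinite m hm (x₀ ^ m)).toFinset := by
        simp [Set.Finite.mem_toFinset]
      have hle : star (f x₀) * f x₀ ≤
          ∑ w ∈ (rootsFinite m hm (x₀ ^ m)).toFinset, star (f w) * f w :=
        Finset.single_le_sum (fun w _ => hterm w) hx
      have h1 : ‖star (f x₀) * f x₀‖ ≤
          ‖∑ w ∈ (rootsFinite m hm (x₀ ^ m)).toFinset, star (f w) * f w‖ :=
        normLeNorm (hterm x₀) hle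
      rw [norm_mul, norm_star, ← sq] at h1
      have h2 : (∑ w ∈ (rootsFinite m hm (x₀ ^ m)).toFinset, star (f w) * f w)
          = (m:ℂ) * Lm m (fun w => star (f w) * f w) (x₀ ^ m) := by
        rw [LmEq m hm, ← mul_assoc, mul_inv_cancel₀ (Nat.cast_ne_zero.mpr hm.ne' : (m:ℂ) ≠ 0), one_mul]
      rw [h2, norm_mul, Complex.norm_natCast] at h1
      exact h1
    have hsup : ‖Lm m (fun w => star (f w) * f w) (x₀ ^ m)‖ ≤ M :=
      le_ciSup hbdd (x₀ ^ m)
    calc ‖f‖ ^ 2 ≤ ‖f x₀‖ ^ 2 := pow_le_pow_left₀ (norm_nonneg _) hf 2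
      _ ≤ m * ‖Lm m (fun w => star (f w) * f w) (x₀ ^ m)‖ := key
      _ ≤ m * M := mul_le_mul_of_nonneg_left hsup (by positivity)
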